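/- Assume moreover that the sets {t_{n+1} − t_n : n ≥ 1} and {b_n : n ≥ 1} are finite, and set ℓ := 1 + sup_n (t_{n+1} − t_n). Then the decomposition of μ into its pieces is simple in the following sense: for all indices n, m ≥ 1, if μ(t_n + A) = μ(t_m + A) for every Borel set A ⊆ [0, ℓ), then b_n = b_m and t_{n+1} − t_n = t_{m+1} − t_m. -/
import Mathlib


open Set MeasureTheory

/-- The atomic measure `μ = Σₙ βₙ δ_{tₙ}` with weights
`βₙ = (√bₙ + 1)/(√bₙ - 1)` associated to a radial metric tree. -/
noncomputable def treeMeasure (t b : ℕ → ℝ) : Measure ℝ :=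
  Measure.sum fun n =>
    ENNReal.ofReal ((Real.sqrt (b n) + 1) / (Real.sqrt (b n) - 1)) • Measure.dirac (t n)

lemma treeMeasure_singleton (t b : ℕ → ℝ) (htinj : Function.Injective t) (k : ℕ) :
    treeMeasure t b {t k}
      = ENNReal.ofReal ((Real.sqrt (b k) + 1) / (Real.sqrt (b k) - 1)) := by
  rw [treeMeasure, Measure.sum_apply _ (measurableSet_singleton _)]
  rw [tsum_eq_single k]
  · simp [Measure.dirac_apply' _ (measurableSet_singleton (t k))]
  · intro n hn
    have : t n ≠ t k := fun h => hn (htinj h)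
    simp [Measure.dirac_apply' _ (measurableSet_singleton (t k)), Set.indicator_apply, this]

lemma treeMeasure_singleton_zero (t b : ℕ → ℝ) (x : ℝ) (hx : ∀ k, t k ≠ x) :
    treeMeasure t b {x} = 0 := by
  rw [treeMeasure, Measure.sum_apply _ (measurableSet_singleton _)]
  convert tsum_zero with n
  have : t n ≠ x := hx n
  simp [Measure.dirac_apply' _ (measurableSet_singleton x), Set.indicator_apply, this]

theorem treeMeasure_simple_decomposition
    (t b : ℕ → ℝ)
    (ht_pos : ∀ n, 0 < t n) (ht_mono : StrictMono t)
    (hgap : ∃ δ > 0, ∀ n, δ ≤ t (n + 1) - t n)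
    (hb : ∃ c > 1, ∀ n, c ≤ b n)
    (hfin_gaps : (Set.range fun n => t (n + 1) - t n).Finite)
    (hfin_b : (Set.range b).Finite) :
    ∀ n m : ℕ,
      (∀ A : Set ℝ, MeasurableSet A →
          A ⊆ Set.Ico 0 (1 + ⨆ j : ℕ, (t (j + 1) - t j)) →
          treeMeasure t b ((fun y => t n + y) '' A)
            = treeMeasure t b ((fun y => t m + y) '' A)) →
      b n = b m ∧ t (n + 1) - t n = t (m + 1) - t m := by
  intro n m hA
  obtain ⟨δ, hδ, hδle⟩ := hgap
  obtain ⟨c, hc, hcle⟩ := hb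
  have htinj := ht_mono.injective
  have hbdd : BddAbove (Set.range fun j => t (j + 1) - t j) := hfin_gaps.bddAbove
  have hgle : ∀ j, t (j + 1) - t j ≤ ⨆ j : ℕ, (t (j + 1) - t j) := fun j => le_ciSup hbdd j
  have hgmem : ∀ j, t (j + 1) - t j ∈ Set.Ico (0 : ℝ) (1 + ⨆ j : ℕ, (t (j + 1) - t j)) := by
    intro j
    exact ⟨by have := hδle j; linarith, by have := hgle j; linarith⟩
  have hsqrt : ∀ k, 1 < Real.sqrt (b k) := by
    intro k
    have hbk : 1 < b k := lt_of_lt_of_le hc (hcle k)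
    calc (1 : ℝ) = Real.sqrt 1 := by simp
    _ < Real.sqrt (b k) := Real.sqrt_lt_sqrt (by norm_num) hbk
  have hβpos : ∀ k, 0 < (Real.sqrt (b k) + 1) / (Real.sqrt (b k) - 1) := by
    intro k
    have := hsqrt k
    exact div_pos (by linarith) (by linarith)
  -- b n = b m
  have hbeq : b n = b m := by
    have h0 := hA {0} (measurableSet_singleton 0) (by
      intro x hx
      simp only [Set.mem_singleton_iff] at hx
      subst hx
      exact ⟨le_refl 0, by have := hδle 0; have := hgle 0; linarith⟩)
    rw [Set.image_singleton, Set.image_singleton, add_zero, add_zero,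
      treeMeasure_singleton t b htinj n, treeMeasure_singleton t b htinj m] at h0
    have hβeq := (ENNReal.ofReal_eq_ofReal_iff (hβpos n).le (hβpos m).le).mp h0
    have hsn := hsqrt n
    have hsm := hsqrt m
    have hseq : Real.sqrt (b n) = Real.sqrt (b m) := by
      have h1 : Real.sqrt (b n) - 1 ≠ 0 := by linarith
      have h2 : Real.sqrt (b m) - 1 ≠ 0 := by linarith
      field_simp at hβeq
      nlinarith [hβeq]
    have hbn0 : (0 : ℝ) ≤ b n := by linarith [hcle n]
    have hbm0 : (0 : ℝ) ≤ b m := by linarith [hcle m]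
    calc b n = Real.sqrt (b n) ^ 2 := (Real.sq_sqrt hbn0).symm
    _ = Real.sqrt (b m) ^ 2 := by rw [hseq]
    _ = b m := Real.sq_sqrt hbm0
  refine ⟨hbeq, ?_⟩
  by_contra hne
  rcases lt_or_gt_of_ne hne with hlt | hlt
  · have h1 := hA {t (n + 1) - t n} (measurableSet_singleton _) (by
      intro x hx
      simp only [Set.mem_singleton_iff] at hx
      subst hx
      exact hgmem n)
    rw [Set.image_singleton, Set.image_singleton,
      show t n + (t (n + 1) - t n) = t (n + 1) by ring,
      treeMeasure_singleton t b htinj (n + 1)] at h1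
    have hzero : treeMeasure t b {t m + (t (n + 1) - t n)} = 0 := by
      apply treeMeasure_singleton_zero
      intro k hk
      have hpos : 0 < t (n + 1) - t n := lt_of_lt_of_le hδ (hδle n)
      rcases lt_or_ge k (m + 1) with h | h
      · have : t k ≤ t m := ht_mono.monotone (Nat.lt_succ_iff.mp h)
        linarith [hk]
      · have : t (m + 1) ≤ t k := ht_mono.monotone h
        linarith [hk]
    rw [hzero] at h1
    exact absurd h1 (ne_of_gt (ENNReal.ofReal_pos.mpr (hβpos (n + 1))))
  · have h1 := hA {t (m + 1) - t m} (measurableSet_singleton _) (by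
      intro x hx
      simp only [Set.mem_singleton_iff] at hx
      subst hx
      exact hgmem m)
    rw [Set.image_singleton, Set.image_singleton,
      show t m + (t (m + 1) - t m) = t (m + 1) by ring,
      treeMeasure_singleton t b htinj (m + 1)] at h1
    have hzero : treeMeasure t b {t n + (t (m + 1) - t m)} = 0 := by
      apply treeMeasure_singleton_zero
      intro k hk
      have hpos : 0 < t (m + 1) - t m := lt_of_lt_of_le hδ (hδle m)
      rcases lt_or_ge k (n + 1) with h | h
      · have : t k ≤ t n := ht_mono.monotone (Nat.lt_succ_iff.mp h)
        linarith [hk]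
      · have : t (n + 1) ≤ t k := ht_mono.monotone h
        linarith [hk]
    rw [hzero] at h1
    exact absurd h1.symm (ne_of_gt (ENNReal.ofReal_pos.mpr (hβpos (m + 1))))
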